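/- Let n ≥ 1 and let f be a polynomial in n variables with real coefficients satisfying the smoothness assumption (S). Let C be a connected component of S = {x ∈ ℝⁿ : f(x) ≠ 0} and let B be a connected component of the boundary closure(C) \ C of C (closure in the Euclidean topology). Then B is a connected component of the real algebraic set Z(f) = {x ∈ ℝⁿ : f(x) = 0}. -/

import Mathlib

open MvPolynomial Set Topology Filter

noncomputable def mvGrad {n : ℕ} (f : MvPolynomial (Fin n) ℝ) (x : Fin n → ℝ) :
    (Fin n → ℝ) →L[ℝ] ℝ :=
  ∑ j, MvPolynomial.eval x (MvPolynomial.pderiv j f) • ContinuousLinearMap.proj j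

lemma mvGrad_apply {n : ℕ} (f : MvPolynomial (Fin n) ℝ) (x v : Fin n → ℝ) :
    mvGrad f x v = ∑ j, MvPolynomial.eval x (MvPolynomial.pderiv j f) * v j := by
  simp [mvGrad, ContinuousLinearMap.sum_apply]

lemma hasStrictFDerivAt_mveval {n : ℕ} (f : MvPolynomial (Fin n) ℝ) (x : Fin n → ℝ) :
    HasStrictFDerivAt (fun y => MvPolynomial.eval y f) (mvGrad f x) x := by
  induction f using MvPolynomial.induction_on with
  | C a =>
      have : mvGrad (C a : MvPolynomial (Fin n) ℝ) x = 0 := by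
        ext v; simp [mvGrad_apply, pderiv_C]
      rw [this]
      simpa using hasStrictFDerivAt_const (𝕜 := ℝ) a x
  | add p q hp hq =>
      have h2 : mvGrad (p + q) x = mvGrad p x + mvGrad q x := by
        ext v; simp [mvGrad_apply, add_mul, Finset.sum_add_distrib]
      rw [h2]
      simp only [map_add]
      exact hp.add hq
  | mul_X p j hp =>
      have hX : HasStrictFDerivAt (𝕜 := ℝ) (fun y : Fin n → ℝ => y j)
          (ContinuousLinearMap.proj j) x := by
        exact (ContinuousLinearMap.proj (R := ℝ) (φ := fun _ : Fin n => ℝ) j).hasStrictFDerivAt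
      have h := hp.mul hX
      have h2 : mvGrad (p * X j) x =
          MvPolynomial.eval x p • ContinuousLinearMap.proj j + x j • mvGrad p x := by
        ext v
        classical
        simp [mvGrad_apply, pderiv_mul, pderiv_X, add_mul, Finset.sum_add_distrib,
          mul_comm, mul_assoc, mul_left_comm, apply_ite, Finset.mul_sum, Finset.sum_ite_eq, Finset.sum_ite_eq', Pi.single_apply,
          ite_mul, mul_add, Finset.sum_add_distrib, eq_comm]
      rw [h2]
      simp only [map_mul, eval_X]
      exact h

lemma key_local {n : ℕ} (f : MvPolynomial (Fin n) ℝ) (x : Fin n → ℝ) (i : Fin n)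
    (hx : MvPolynomial.eval x f = 0) (hd : MvPolynomial.eval x (MvPolynomial.pderiv i f) ≠ 0) :
    ∃ U : Set (Fin n → ℝ), IsOpen U ∧ x ∈ U ∧
      ∃ P Q : Set (Fin n → ℝ), IsPreconnected P ∧ IsPreconnected Q ∧
        (∀ y ∈ P, MvPolynomial.eval y f ≠ 0) ∧ (∀ y ∈ Q, MvPolynomial.eval y f ≠ 0) ∧
        (∀ y ∈ U, MvPolynomial.eval y f ≠ 0 → y ∈ P ∪ Q) ∧
        (∀ z ∈ U, MvPolynomial.eval z f = 0 → z ∈ closure P ∧ z ∈ closure Q) := by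
  classical
  set F : (Fin n → ℝ) → (Fin n → ℝ) := fun y j => if j = i then MvPolynomial.eval y f else y j
    with hFdef
  have hFi : ∀ y, F y i = MvPolynomial.eval y f := fun y => by simp [hFdef]
  set A : (Fin n → ℝ) →L[ℝ] (Fin n → ℝ) :=
    ContinuousLinearMap.pi
      (fun j => if j = i then mvGrad f x else ContinuousLinearMap.proj j) with hAdef
  have hF : HasStrictFDerivAt F A x := by
    apply hasStrictFDerivAt_pi''
    intro j
    rw [hAdef, ContinuousLinearMap.proj_pi]
    by_cases hj : j = i
    · subst hj
      simp only [hFdef, if_pos rfl]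
      exact hasStrictFDerivAt_mveval f x
    · simp only [hFdef, if_neg hj]
      exact (ContinuousLinearMap.proj (R := ℝ) (φ := fun _ : Fin n => ℝ) j).hasStrictFDerivAt
  have hinj : Function.Injective A := by
    rw [injective_iff_map_eq_zero]
    intro v hv
    have hvj : ∀ j, j ≠ i → v j = 0 := by
      intro j hj
      have := congrFun hv j
      simpa [hAdef, ContinuousLinearMap.pi_apply, if_neg hj] using this
    have hvi : v i = 0 := by
      have h1 := congrFun hv i
      rw [hAdef] at h1
      simp only [ContinuousLinearMap.pi_apply, eq_self_iff_true, if_true, Pi.zero_apply] at h1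
      rw [mvGrad_apply] at h1
      rw [Finset.sum_eq_single i (fun b _ hb => by rw [hvj b hb, mul_zero])
        (fun h => absurd (Finset.mem_univ i) h)] at h1
      exact (mul_eq_zero.1 h1).resolve_left hd
    funext j
    by_cases hj : j = i
    · subst hj; exact hvi
    · exact hvj j hj
  have hsurj : Function.Surjective A :=
    (LinearMap.injective_iff_surjective (f := (A : (Fin n → ℝ) →ₗ[ℝ] (Fin n → ℝ)))).1 hinj
  let eA : (Fin n → ℝ) ≃L[ℝ] (Fin n → ℝ) :=
    (LinearEquiv.ofBijective (A : (Fin n → ℝ) →ₗ[ℝ] (Fin n → ℝ))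
      ⟨hinj, hsurj⟩).toContinuousLinearEquiv
  have hcoe : (eA : (Fin n → ℝ) →L[ℝ] (Fin n → ℝ)) = A := by ext v; rfl
  have hF' : HasStrictFDerivAt F (eA : (Fin n → ℝ) →L[ℝ] (Fin n → ℝ)) x := by
    rw [hcoe]; exact hF
  set e := hF'.toOpenPartialHomeomorph F with hedef
  have hxe : x ∈ e.source := hF'.mem_toOpenPartialHomeomorph_source
  have hecoe : ⇑e = F := hF'.toOpenPartialHomeomorph_coe
  have hFx : F x ∈ e.target := by rw [← hecoe]; exact e.map_source hxe
  obtain ⟨ε, hε, hball⟩ := Metric.isOpen_iff.1 e.open_target (F x) hFx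
  set V : Set (Fin n → ℝ) := Metric.ball (F x) ε with hVdef
  have hVsub : V ⊆ e.target := hball
  have hVopen : IsOpen V := Metric.isOpen_ball
  set U : Set (Fin n → ℝ) := e.source ∩ e ⁻¹' V with hUdef
  have hUopen : IsOpen U :=
    e.continuousOn.isOpen_inter_preimage e.open_source hVopen
  have hxU : x ∈ U := by
    refine ⟨hxe, ?_⟩
    show e x ∈ V
    rw [hecoe]
    exact Metric.mem_ball_self hε
  have hlin : IsLinearMap ℝ (fun u : Fin n → ℝ => u i) := ⟨fun a b => rfl, fun c a => rfl⟩
  set Vp : Set (Fin n → ℝ) := {u | u ∈ V ∧ 0 < u i} with hVpdef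
  set Vm : Set (Fin n → ℝ) := {u | u ∈ V ∧ u i < 0} with hVmdef
  have hVpconv : Convex ℝ Vp := (convex_ball _ _).inter (convex_halfSpace_gt hlin 0)
  have hVmconv : Convex ℝ Vm := (convex_ball _ _).inter (convex_halfSpace_lt hlin 0)
  set P : Set (Fin n → ℝ) := e.symm '' Vp with hPdef
  set Q : Set (Fin n → ℝ) := e.symm '' Vm with hQdef
  have hsymmcont : ContinuousOn e.symm e.target := e.symm.continuousOn.mono (by rw [e.symm_source])
  have hPQ : ∀ (W : Set (Fin n → ℝ)), W ⊆ V → IsPreconnected W →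
      IsPreconnected (e.symm '' W) := fun W hWV hW =>
    hW.image _ (hsymmcont.mono (hWV.trans hVsub))
  have hPpre : IsPreconnected P := hPQ Vp (fun u hu => hu.1) hVpconv.isPreconnected
  have hQpre : IsPreconnected Q := hPQ Vm (fun u hu => hu.1) hVmconv.isPreconnected
  -- evaluation on images
  have himg : ∀ u ∈ V, MvPolynomial.eval (e.symm u) f = u i := by
    intro u hu
    have h1 : e (e.symm u) = u := e.right_inv (hVsub hu)
    rw [← hFi (e.symm u), ← hecoe, h1]
  refine ⟨U, hUopen, hxU, P, Q, hPpre, hQpre, ?_, ?_, ?_, ?_⟩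
  · rintro y ⟨u, hu, rfl⟩
    rw [himg u hu.1]; exact ne_of_gt hu.2
  · rintro y ⟨u, hu, rfl⟩
    rw [himg u hu.1]; exact ne_of_lt hu.2
  · rintro y ⟨hys, hyV⟩ hyf
    have hyi : (e y) i = MvPolynomial.eval y f := by rw [hecoe]; exact hFi y
    have hy' : y = e.symm (e y) := (e.left_inv hys).symm
    rcases hyf.lt_or_gt with h | h
    · right; exact ⟨e y, ⟨hyV, by rw [hyi]; exact h⟩, hy'.symm⟩
    · left; exact ⟨e y, ⟨hyV, by rw [hyi]; exact h⟩, hy'.symm⟩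
  · rintro z ⟨hzs, hzV⟩ hzf
    set w := e z with hwdef
    have hwV : w ∈ V := hzV
    have hwi : w i = 0 := by rw [hwdef, hecoe, hFi]; exact hzf
    have hzw : e.symm w = z := e.left_inv hzs
    have hsymm_at : ContinuousAt e.symm w := by
      have : w ∈ e.symm.source := by rw [e.symm_source]; exact hVsub hwV
      exact e.symm.continuousAt this
    have hdir : ∀ t : ℝ, (w + t • (Pi.single i 1 : Fin n → ℝ)) i = t := by
      intro t; simp [hwi, Pi.single_apply]
    have hcont : Continuous (fun t : ℝ => w + t • (Pi.single i 1 : Fin n → ℝ)) :=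
      continuous_const.add (continuous_id.smul continuous_const)
    have hg : Filter.Tendsto (fun t : ℝ => w + t • (Pi.single i 1 : Fin n → ℝ))
        (𝓝 (0:ℝ)) (𝓝 w) := by
      have h0 : w + (0:ℝ) • (Pi.single i 1 : Fin n → ℝ) = w := by rw [zero_smul, add_zero]
      have := hcont.tendsto 0
      rwa [h0] at this
    constructor
    · -- closure P : approach from positive side
      have h2 : Filter.Tendsto (fun t : ℝ => w + t • (Pi.single i 1 : Fin n → ℝ))
          (𝓝[>] (0:ℝ)) (𝓝 w) := hg.mono_left nhdsWithin_le_nhds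
      have htend : Filter.Tendsto (fun t : ℝ => e.symm (w + t • (Pi.single i 1 : Fin n → ℝ)))
          (𝓝[>] (0:ℝ)) (𝓝 z) := by
        have h3 := hsymm_at.tendsto.comp h2
        rwa [hzw] at h3
      refine mem_closure_of_tendsto htend ?_
      have hev : ∀ᶠ t in 𝓝[>] (0:ℝ), (w + t • (Pi.single i 1 : Fin n → ℝ)) ∈ V :=
        h2.eventually (hVopen.mem_nhds hwV)
      filter_upwards [hev, self_mem_nhdsWithin] with t htV ht
      exact ⟨w + t • (Pi.single i 1 : Fin n → ℝ), ⟨htV, by rw [hdir]; exact mem_Ioi.mp ht⟩, rfl⟩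
    · have h2 : Filter.Tendsto (fun t : ℝ => w + t • (Pi.single i 1 : Fin n → ℝ))
          (𝓝[<] (0:ℝ)) (𝓝 w) := hg.mono_left nhdsWithin_le_nhds
      have htend : Filter.Tendsto (fun t : ℝ => e.symm (w + t • (Pi.single i 1 : Fin n → ℝ)))
          (𝓝[<] (0:ℝ)) (𝓝 z) := by
        have h3 := hsymm_at.tendsto.comp h2
        rwa [hzw] at h3
      refine mem_closure_of_tendsto htend ?_
      have hev : ∀ᶠ t in 𝓝[<] (0:ℝ), (w + t • (Pi.single i 1 : Fin n → ℝ)) ∈ V :=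
        h2.eventually (hVopen.mem_nhds hwV)
      filter_upwards [hev, self_mem_nhdsWithin] with t htV ht
      exact ⟨w + t • (Pi.single i 1 : Fin n → ℝ), ⟨htV, by rw [hdir]; exact mem_Iio.mp ht⟩, rfl⟩

lemma eval_complex_of_real {n : ℕ} (f : MvPolynomial (Fin n) ℝ) (z : Fin n → ℝ) :
    MvPolynomial.eval (fun j => (z j : ℂ)) (MvPolynomial.map (algebraMap ℝ ℂ) f)
      = ((MvPolynomial.eval z f : ℝ) : ℂ) := by
  rw [MvPolynomial.eval_map]
  have h := MvPolynomial.eval₂_comp_left (algebraMap ℝ ℂ) (RingHom.id ℝ) z f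
  simp only [RingHom.comp_id] at h
  have h2 : (fun j => ((z j : ℝ) : ℂ)) = (⇑(algebraMap ℝ ℂ) ∘ z) := rfl
  rw [h2, ← h, MvPolynomial.eval₂_id]
  rfl

theorem stmt3 (n : ℕ) (hn : 1 ≤ n) (f : MvPolynomial (Fin n) ℝ)
    (hS : ∀ z : Fin n → ℂ,
      MvPolynomial.eval z (MvPolynomial.map (algebraMap ℝ ℂ) f) = 0 →
      ∃ i, MvPolynomial.eval z
        (MvPolynomial.map (algebraMap ℝ ℂ) (MvPolynomial.pderiv i f)) ≠ 0)
    (C B : Set (Fin n → ℝ))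
    (hC : ∃ x ∈ {x : Fin n → ℝ | MvPolynomial.eval x f ≠ 0},
      C = connectedComponentIn {x : Fin n → ℝ | MvPolynomial.eval x f ≠ 0} x)
    (hB : ∃ y ∈ closure C \ C, B = connectedComponentIn (closure C \ C) y) :
    ∃ z ∈ {x : Fin n → ℝ | MvPolynomial.eval x f = 0},
      B = connectedComponentIn {x : Fin n → ℝ | MvPolynomial.eval x f = 0} z := by
  classical
  obtain ⟨x₀, hx₀, hCdef⟩ := hC
  obtain ⟨y, hyD, hBdef⟩ := hB
  set S : Set (Fin n → ℝ) := {x | MvPolynomial.eval x f ≠ 0} with hSdef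
  set Z : Set (Fin n → ℝ) := {x | MvPolynomial.eval x f = 0} with hZdef
  have hcont : Continuous fun y : Fin n → ℝ => MvPolynomial.eval y f :=
    continuous_iff_continuousAt.2 fun x => (hasStrictFDerivAt_mveval f x).continuousAt
  have hSopen : IsOpen S := isOpen_compl_singleton.preimage hcont
  have hCopen : IsOpen C := hCdef ▸ hSopen.connectedComponentIn
  have hCsub : C ⊆ S := hCdef ▸ connectedComponentIn_subset _ _
  have hcplopen : IsOpen (S \ C) := by
    refine isOpen_iff_forall_mem_open.2 fun v hv => ?_
    refine ⟨connectedComponentIn S v, fun w hw => ⟨connectedComponentIn_subset _ _ hw,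
      fun hwC => hv.2 ?_⟩, hSopen.connectedComponentIn, mem_connectedComponentIn hv.1⟩
    have h1 := connectedComponentIn_eq hw
    have h2 := connectedComponentIn_eq (hCdef ▸ hwC : w ∈ connectedComponentIn S x₀)
    rw [hCdef, h2, ← h1]
    exact mem_connectedComponentIn hv.1
  have hclosSC : closure C ∩ S ⊆ C := by
    rintro v ⟨hv1, hv2⟩
    by_contra hvC
    rcases mem_closure_iff.1 hv1 (S \ C) hcplopen ⟨hv2, hvC⟩ with ⟨w, hw1, hw2⟩
    exact hw1.2 hw2
  set D : Set (Fin n → ℝ) := closure C \ C with hDdef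
  have hDZ : D ⊆ Z := by
    intro v hv
    by_contra hvZ
    exact hv.2 (hclosSC ⟨hv.1, hvZ⟩)
  have hZC : ∀ v ∈ Z, v ∉ C := fun v hv hvC => (hCsub hvC) hv
  have hDeq : D = closure C ∩ Z := by
    apply subset_antisymm
    · exact fun v hv => ⟨hv.1, hDZ hv⟩
    · exact fun v hv => ⟨hv.1, hZC v hv.2⟩
  have hDopen : ∀ z ∈ D, ∃ U, IsOpen U ∧ z ∈ U ∧ Z ∩ U ⊆ D := by
    intro z hz
    have hzZ : z ∈ Z := hDZ hz
    have hzC0 : MvPolynomial.eval (fun j => (z j : ℂ))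
        (MvPolynomial.map (algebraMap ℝ ℂ) f) = 0 := by
      rw [eval_complex_of_real, hzZ]; exact Complex.ofReal_zero
    obtain ⟨i, hi⟩ := hS _ hzC0
    have hi' : MvPolynomial.eval z (MvPolynomial.pderiv i f) ≠ 0 := by
      intro h
      apply hi
      rw [eval_complex_of_real, h]
      exact Complex.ofReal_zero
    obtain ⟨U, hUopen, hzU, P, Q, hPpre, hQpre, hPne, hQne, hPQcover, hclos⟩ :=
      key_local f z i hzZ hi'
    obtain ⟨c, hcC, hcU⟩ : (C ∩ U).Nonempty := by
      rcases mem_closure_iff.1 hz.1 U hUopen hzU with ⟨w, hw1, hw2⟩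
      exact ⟨w, hw2, hw1⟩
    have hcS : MvPolynomial.eval c f ≠ 0 := hCsub hcC
    have main : ∀ R : Set (Fin n → ℝ), IsPreconnected R →
        (∀ y' ∈ R, MvPolynomial.eval y' f ≠ 0) → c ∈ R →
        (∀ z' ∈ U, MvPolynomial.eval z' f = 0 → z' ∈ closure R) → Z ∩ U ⊆ D := by
      intro R hRpre hRS hcR hcl
      have hRC : R ⊆ C := by
        have h1 : R ⊆ connectedComponentIn S c :=
          hRpre.subset_connectedComponentIn hcR hRS
        have h2 := connectedComponentIn_eq (hCdef ▸ hcC : c ∈ connectedComponentIn S x₀)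
        rw [hCdef, h2]
        exact h1
      rintro z' ⟨hz'Z, hz'U⟩
      exact ⟨closure_mono hRC (hcl z' hz'U hz'Z), hZC z' hz'Z⟩
    rcases hPQcover c hcU hcS with h | h
    · exact ⟨U, hUopen, hzU, main P hPpre hPne h (fun z' hz'U hz'f => (hclos z' hz'U hz'f).1)⟩
    · exact ⟨U, hUopen, hzU, main Q hQpre hQne h (fun z' hz'U hz'f => (hclos z' hz'U hz'f).2)⟩
  choose! Uf hUfopen hUfmem hUfsub using hDopen
  set O : Set (Fin n → ℝ) := ⋃ z ∈ D, Uf z with hOdef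
  have hOopen : IsOpen O := isOpen_biUnion fun z hz => hUfopen z hz
  have hDO : D ⊆ O := fun z hz => mem_biUnion hz (hUfmem z hz)
  have hZO : Z ∩ O ⊆ D := by
    rintro v ⟨hvZ, hvO⟩
    rcases mem_iUnion₂.1 hvO with ⟨z, hz, hvU⟩
    exact hUfsub z hz ⟨hvZ, hvU⟩
  -- final clopen argument
  have hyZ : y ∈ Z := hDZ hyD
  refine ⟨y, hyZ, ?_⟩
  rw [hBdef]
  apply subset_antisymm
  · exact isPreconnected_connectedComponentIn.subset_connectedComponentIn
      (mem_connectedComponentIn hyD) ((connectedComponentIn_subset _ _).trans hDZ)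
  · have hT : connectedComponentIn Z y ⊆ D := by
      have hTpre : IsPreconnected (connectedComponentIn Z y) :=
        isPreconnected_connectedComponentIn
      have hTZ : connectedComponentIn Z y ⊆ Z := connectedComponentIn_subset _ _
      have hyT : y ∈ connectedComponentIn Z y := mem_connectedComponentIn hyZ
      by_contra hcon
      obtain ⟨t, htT, htD⟩ := not_subset.1 hcon
      have hcover : connectedComponentIn Z y ⊆ O ∪ (closure C)ᶜ := by
        intro v hv
        by_cases hvK : v ∈ closure C
        · exact Or.inl (hDO (hDeq ▸ ⟨hvK, hTZ hv⟩))
        · exact Or.inr hvK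
      have h1 : (connectedComponentIn Z y ∩ O).Nonempty := ⟨y, hyT, hDO hyD⟩
      have h2 : (connectedComponentIn Z y ∩ (closure C)ᶜ).Nonempty := by
        refine ⟨t, htT, fun hk => htD ?_⟩
        rw [hDeq]; exact ⟨hk, hTZ htT⟩
      obtain ⟨v, hvT, hvO, hvK⟩ := hTpre O (closure C)ᶜ hOopen
        isClosed_closure.isOpen_compl hcover h1 h2
      exact hvK ((hDeq ▸ (hZO ⟨hTZ hvT, hvO⟩) : v ∈ closure C ∩ Z).1)
    intro v hv
    exact (isPreconnected_connectedComponentIn.subset_connectedComponentIn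
      (mem_connectedComponentIn hyZ) hT : connectedComponentIn Z y ⊆ connectedComponentIn D y) hv
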